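/- arXiv:2601.02258 — 2 statements merged into one kernel-verified Lean document; each statement's English description precedes it below -/
import Mathlib

section
/- Let R be a commutative ring, W an R-module, q ∈ R, F an automorphism and N an endomorphism of W with N ∘ F = q·(F ∘ N). If both (F − 1) and (qF − 1) are invertible endomorphisms of W, then the complex W →^{d₀} W ⊕ W →^{d₁} W with d₀(w) = ((F − 1)w, Nw) and d₁(a,b) = Na + (1 − qF)b is exact everywhere: d₀ is injective, ker d₁ = im d₀, and d₁ is surjective. -/
/-- First differential `w ↦ ((F - 1)w, Nw)` of the Weil–Deligne complex. -/
noncomputable def wdD0 {R W : Type*} [CommRing R] [AddCommGroup W] [Module R W]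
    (F N : W →ₗ[R] W) : W →ₗ[R] W × W :=
  (F - LinearMap.id).prod N

/-- Second differential `(a, b) ↦ Na + (1 - qF)b` of the Weil–Deligne complex. -/
noncomputable def wdD1 {R W : Type*} [CommRing R] [AddCommGroup W] [Module R W]
    (q : R) (F N : W →ₗ[R] W) : W × W →ₗ[R] W :=
  N ∘ₗ LinearMap.fst R W W + (LinearMap.id - q • F) ∘ₗ LinearMap.snd R W W

/-- If `F - 1` and `qF - 1` are invertible endomorphisms of `W`, then the
Weil–Deligne complex `W → W ⊕ W → W` is exact everywhere: `d₀` is injective,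
`ker d₁ = im d₀`, and `d₁` is surjective. -/
theorem stmt5 (R W : Type*) [CommRing R] [AddCommGroup W] [Module R W] (q : R)
    (F : W ≃ₗ[R] W) (N : W →ₗ[R] W)
    (h : N ∘ₗ (F : W →ₗ[R] W) = q • ((F : W →ₗ[R] W) ∘ₗ N))
    (hF1 : Function.Bijective ((F : W →ₗ[R] W) - (LinearMap.id : W →ₗ[R] W)))
    (hqF1 : Function.Bijective (q • (F : W →ₗ[R] W) - (LinearMap.id : W →ₗ[R] W))) :
    Function.Injective (wdD0 (F : W →ₗ[R] W) N) ∧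
    LinearMap.ker (wdD1 q (F : W →ₗ[R] W) N)
      = LinearMap.range (wdD0 (F : W →ₗ[R] W) N) ∧
    Function.Surjective (wdD1 q (F : W →ₗ[R] W) N) := by
  -- key identity : (qF - 1) ∘ N = N ∘ (F - 1)
  have key : (q • (F : W →ₗ[R] W) - LinearMap.id) ∘ₗ N
      = N ∘ₗ ((F : W →ₗ[R] W) - LinearMap.id) := by
    simp only [LinearMap.sub_comp, LinearMap.comp_sub, LinearMap.smul_comp,
      LinearMap.id_comp, LinearMap.comp_id, ← h]
  refine ⟨?_, ?_, ?_⟩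
  · intro x y hxy
    have h1 : ((F : W →ₗ[R] W) - LinearMap.id : W →ₗ[R] W) x
        = ((F : W →ₗ[R] W) - LinearMap.id : W →ₗ[R] W) y := by
      have := congrArg Prod.fst hxy
      simpa [wdD0] using this
    exact hF1.injective h1
  · ext ⟨a, b⟩
    simp only [LinearMap.mem_ker, LinearMap.mem_range, wdD0, wdD1]
    constructor
    · intro hab
      simp only [LinearMap.add_apply, LinearMap.comp_apply, LinearMap.fst_apply,
        LinearMap.snd_apply, LinearMap.sub_apply, LinearMap.id_apply,
        LinearMap.smul_apply] at hab
      obtain ⟨w, hw⟩ := hF1.surjective a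
      refine ⟨w, ?_⟩
      have hb : N w = b := by
        apply hqF1.injective
        have h1 : (q • (F : W →ₗ[R] W) - LinearMap.id : W →ₗ[R] W) (N w) = N a := by
          have hk := congrFun (congrArg DFunLike.coe key) w
          simp only [LinearMap.comp_apply] at hk
          rw [hk, hw]
        have h2 : (q • (F : W →ₗ[R] W) - LinearMap.id : W →ₗ[R] W) b = N a := by
          simp only [LinearMap.sub_apply, LinearMap.smul_apply, LinearMap.id_apply]
          have h' := eq_neg_of_add_eq_zero_right hab
          rw [← neg_sub b (q • (F : W →ₗ[R] W) b), h', neg_neg]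
        exact h1.trans h2.symm
      simp [LinearMap.prod_apply, hw, hb, Prod.ext_iff]
    · rintro ⟨w, hw⟩
      simp only [LinearMap.prod_apply, Function.prod, Prod.mk.injEq] at hw
      obtain ⟨ha, hb⟩ := hw
      subst ha hb
      have h4 := congrFun (congrArg DFunLike.coe h) w
      simp only [LinearMap.comp_apply, LinearMap.smul_apply] at h4
      simp only [LinearMap.add_apply, LinearMap.comp_apply, LinearMap.fst_apply,
        LinearMap.snd_apply, LinearMap.sub_apply, LinearMap.id_apply,
        LinearMap.smul_apply, map_sub]
      rw [h4]
      abel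
  · intro w
    obtain ⟨b, hb⟩ := hqF1.surjective (-w)
    refine ⟨(0, b), ?_⟩
    simp only [wdD1, LinearMap.add_apply, LinearMap.comp_apply, LinearMap.fst_apply,
      LinearMap.snd_apply, map_zero, zero_add, LinearMap.sub_apply, LinearMap.id_apply,
      LinearMap.smul_apply]
    simp only [LinearMap.sub_apply, LinearMap.smul_apply, LinearMap.id_apply] at hb
    rw [← neg_sub (q • (F : W →ₗ[R] W) b) b, hb, neg_neg]
end

section
/- Let (A, |·|_A) be a commutative ring equipped with a submultiplicative seminorm. Define the Berkovich spectrum M(A) as the set of all functions x : A → ℝ≥0 that are multiplicative seminorms (x(0)=0, x(1)=1 unless A=0, x(ab)=x(a)x(b), x(a+b) ≤ x(a)+x(b)) and bounded (x(a) ≤ |a|_A for all a ∈ A), endowed with the topology of pointwise convergence. Then M(A) is a compact Hausdorff topological space. -/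
/-- The Berkovich spectrum of a seminormed commutative ring `(A, nA)`: the set
of bounded multiplicative seminorms on `A`, with the topology of pointwise
convergence (induced from the product topology on `A → ℝ≥0`). -/
def BerkovichSpectrum (A : Type*) [CommRing A] (nA : A → NNReal) : Type _ :=
  {x : A → NNReal //
    x 0 = 0 ∧ (x 1 = 1 ∨ Subsingleton A) ∧
    (∀ a b : A, x (a * b) = x a * x b) ∧
    (∀ a b : A, x (a + b) ≤ x a + x b) ∧
    (∀ a : A, x a ≤ nA a)}

instance (A : Type*) [CommRing A] (nA : A → NNReal) :
    TopologicalSpace (BerkovichSpectrum A nA) :=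
  instTopologicalSpaceSubtype

/-- Let `(A, |·|_A)` be a commutative ring with a submultiplicative seminorm.
Then the Berkovich spectrum `M(A)`, the space of bounded multiplicative
seminorms on `A` with the topology of pointwise convergence, is a compact
Hausdorff topological space. -/
theorem stmt13 (A : Type*) [CommRing A] (nA : A → NNReal)
    (h0 : nA 0 = 0) (hadd : ∀ a b : A, nA (a + b) ≤ nA a + nA b)
    (hmul : ∀ a b : A, nA (a * b) ≤ nA a * nA b) :
    CompactSpace (BerkovichSpectrum A nA) ∧ T2Space (BerkovichSpectrum A nA) := by

  set S : Set (A → NNReal) := {x : A → NNReal |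
    x 0 = 0 ∧ (x 1 = 1 ∨ Subsingleton A) ∧
    (∀ a b : A, x (a * b) = x a * x b) ∧
    (∀ a b : A, x (a + b) ≤ x a + x b) ∧
    (∀ a : A, x a ≤ nA a)} with hS
  have hclosed : IsClosed S := by
    rw [hS]
    simp only [Set.setOf_and]
    refine IsClosed.inter (isClosed_eq (continuous_apply 0) continuous_const)
      (IsClosed.inter ?_ (IsClosed.inter ?_ (IsClosed.inter ?_ ?_)))
    · by_cases h : Subsingleton A
      · simp [h]
      · simpa [h] using isClosed_eq (continuous_apply (1 : A)) continuous_const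
    · simp only [Set.setOf_forall]
      exact isClosed_iInter fun a => isClosed_iInter fun b =>
        isClosed_eq (continuous_apply _) ((continuous_apply a).mul (continuous_apply b))
    · simp only [Set.setOf_forall]
      exact isClosed_iInter fun a => isClosed_iInter fun b =>
        isClosed_le (continuous_apply _) ((continuous_apply a).add (continuous_apply b))
    · simp only [Set.setOf_forall]
      exact isClosed_iInter fun a => isClosed_le (continuous_apply a) continuous_const
  have hsub : S ⊆ Set.pi Set.univ fun a => Set.Icc 0 (nA a) := by
    intro x hx a _
    exact ⟨zero_le, hx.2.2.2.2 a⟩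
  have hcompact : IsCompact S :=
    (isCompact_univ_pi fun a => isCompact_Icc).of_isClosed_subset hclosed hsub
  constructor
  · exact isCompact_iff_compactSpace.mp hcompact
  · show T2Space {x : A → NNReal //
      x 0 = 0 ∧ (x 1 = 1 ∨ Subsingleton A) ∧
      (∀ a b : A, x (a * b) = x a * x b) ∧
      (∀ a b : A, x (a + b) ≤ x a + x b) ∧
      (∀ a : A, x a ≤ nA a)}
    infer_instance
end
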